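/- Let S be a K3 surface with quasi-polarization L of genus g, and suppose the Picard lattice of S contains a class M with M² = n ≥ 0, n even, and L·M = d satisfying √(2(g-1)n) < d ≤ (n+2)/2 + g - (2g+2)/(n+4) and d ≤ g-1. Then (n/2 + 2)·((2g-2-2d+n)/2 + 2) ≥ g + 1. -/
import Mathlib

/-- Converse direction of Lemma 1.6: if a class `M` in the Picard lattice of a
quasi-polarized genus `g` K3 surface has `M² = n ≥ 0` even, `L·M = d` with
`√(2(g-1)n) < d ≤ (n+2)/2 + g - (2g+2)/(n+4)` and `d ≤ g-1`, then
`(n/2 + 2)·((2g-2-2d+n)/2 + 2) ≥ g + 1` (so `h⁰(M)h⁰(L-M) ≥ h⁰(L)` and the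
surface is not Brill-Noether general). -/
theorem stmt5 (g d n : ℤ) (hg : 2 ≤ g) (hne : Even n) (hn0 : 0 ≤ n)
    (h1 : Real.sqrt (2 * ((g : ℝ) - 1) * n) < (d : ℝ))
    (h2 : (d : ℚ) ≤ ((n : ℚ) + 2)/2 + g - (2*(g : ℚ) + 2)/((n : ℚ) + 4))
    (h3 : (d : ℚ) ≤ (g : ℚ) - 1) :
    ((n : ℚ)/2 + 2) * ((2*(g : ℚ) - 2 - 2*d + n)/2 + 2) ≥ (g : ℚ) + 1 := by
  have hn : (0:ℚ) ≤ (n:ℚ) := by exact_mod_cast hn0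
  have h4 : (0:ℚ) < (n:ℚ) + 4 := by linarith
  have key : ((2*(g:ℚ) + 2)/((n:ℚ) + 4)) * ((n:ℚ) + 4) = 2*g + 2 :=
    div_mul_cancel₀ _ (ne_of_gt h4)
  nlinarith [mul_le_mul_of_nonneg_right h2 (le_of_lt h4)]
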